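/- Let K be a C² solution of the integral equation K(x,y) + F(x,y) + ∫₀ˣ K(x,t)·F(t,y) dt = 0 on the triangle {(x,y) : 0 ≤ y ≤ x ≤ π}; define ψ_n(x) := φ_n(x) + ∫₀ˣ K(x,t)·φ_n(t) dt, Ã := A − B·K(0,0) and 𝒜̃ := 𝒜 − ℬ·K(π,π). If f : [0,π] → ℝ^N is C¹, satisfies B·f'(0) + ÷f(0) = 0 and ℬ·f'(π) + 𝒜̃·f(π) = 0, and ∫₀^π ⟨f(x), ψ_n(x)⟩ dx = 0 for every n, then f is identically zero. In other words, the family (ψ_n) is complete among functions satisfying these boundary conditions. -/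

import Mathlib

open Matrix MeasureTheory Set Filter

attribute [local instance] Matrix.normedAddCommGroup Matrix.normedSpace

/-- Completeness of the transformed family `(ψ n)`: any C¹ function `f`
satisfying the transformed boundary conditions (with `A' := A - B·K(0,0)` and
`𝒜' := 𝒜 - ℬ·K(π,π)`, the matrices `Ã`, `𝒜̃` of the paper) and orthogonal to every
`ψ n` vanishes identically on `[0,π]`. -/
private lemma dot_integral_aux {N : ℕ} (w : Fin N → ℝ) (v : ℝ → Fin N → ℝ) {a b : ℝ}
    (hv : IntervalIntegrable v MeasureTheory.volume a b) :
    (∫ t in a..b, v t) ⬝ᵥ w = ∫ t in a..b, v t ⬝ᵥ w := by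
  let L : (Fin N → ℝ) →L[ℝ] ℝ := LinearMap.toContinuousLinearMap
    { toFun := fun u => u ⬝ᵥ w
      map_add' := fun a b => add_dotProduct a b w
      map_smul' := fun c a => smul_dotProduct c a w }
  have h := L.intervalIntegral_comp_comm hv
  simpa [L] using h.symm

private lemma cont_int_upper {E : Type*} [NormedAddCommGroup E] [NormedSpace ℝ E]
    (F : ℝ → ℝ → E) (hF : Continuous (Function.uncurry F)) (b : ℝ) :
    Continuous fun x => ∫ t in x..b, F x t := by
  have h := intervalIntegral.continuous_parametric_intervalIntegral_of_continuous
    (μ := volume) (a₀ := b) hF continuous_id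
  have e : (fun x => ∫ t in x..b, F x t) = fun x => -∫ t in b..x, F x t := by
    funext x; rw [intervalIntegral.integral_symm]
  rw [e]; exact h.neg

private lemma triangle_swap (H : ℝ → ℝ → ℝ) (hH : Continuous (Function.uncurry H))
    {b : ℝ} (hb : 0 ≤ b) :
    (∫ x in (0:ℝ)..b, ∫ t in x..b, H x t) = ∫ t in (0:ℝ)..b, ∫ x in (0:ℝ)..t, H x t := by
  set μ : Measure ℝ := volume.restrict (Set.Ioc 0 b) with hμ
  set S : Set (ℝ × ℝ) := {p : ℝ × ℝ | p.1 ≤ p.2} with hS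
  have hSm : MeasurableSet S := measurableSet_le measurable_fst measurable_snd
  set G : ℝ → ℝ → ℝ := fun x t => S.indicator (Function.uncurry H) (x, t) with hG
  have hGint : Integrable (Function.uncurry G) (μ.prod μ) := by
    have h1 : IntegrableOn (Function.uncurry H) (Set.Icc 0 b ×ˢ Set.Icc 0 b)
        (volume : Measure (ℝ × ℝ)) :=
      hH.continuousOn.integrableOn_compact (isCompact_Icc.prod isCompact_Icc)
    have h2 : IntegrableOn (Function.uncurry H) (Set.Ioc 0 b ×ˢ Set.Ioc 0 b)
        (volume : Measure (ℝ × ℝ)) :=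
      h1.mono_set (Set.prod_mono Set.Ioc_subset_Icc_self Set.Ioc_subset_Icc_self)
    have h3 : IntegrableOn (S.indicator (Function.uncurry H)) (Set.Ioc 0 b ×ˢ Set.Ioc 0 b)
        (volume : Measure (ℝ × ℝ)) := h2.indicator hSm
    have h4 : μ.prod μ = (volume : Measure (ℝ × ℝ)).restrict (Set.Ioc 0 b ×ˢ Set.Ioc 0 b) := by
      rw [hμ, Measure.prod_restrict, ← Measure.volume_eq_prod]
    have h5 : Function.uncurry G = S.indicator (Function.uncurry H) := by
      funext p; cases p; rfl
    rw [h4, h5]; exact h3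
  have key := MeasureTheory.integral_integral_swap hGint
  have hL : (∫ x in (0:ℝ)..b, ∫ t in x..b, H x t) = ∫ x, (∫ t, G x t ∂μ) ∂μ := by
    rw [intervalIntegral.integral_of_le hb]
    refine setIntegral_congr_fun measurableSet_Ioc (fun x hx => ?_)
    have e1 : (∫ t, G x t ∂μ) = ∫ t in Set.Ioc 0 b ∩ Set.Ici x, H x t := by
      have e0 : (fun t => G x t) = (Set.Ici x).indicator (H x) := by
        funext t
        simp only [hG, hS, Set.indicator_apply, Set.mem_setOf_eq, Set.mem_Ici, Function.uncurry]
      rw [hμ, e0, setIntegral_indicator measurableSet_Ici]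
    have e2 : Set.Ioc 0 b ∩ Set.Ici x = Set.Icc x b := by
      ext t
      simp only [Set.mem_inter_iff, Set.mem_Ioc, Set.mem_Ici, Set.mem_Icc]
      constructor
      · rintro ⟨⟨_, h2⟩, h3⟩; exact ⟨h3, h2⟩
      · rintro ⟨h1, h2⟩; exact ⟨⟨lt_of_lt_of_le hx.1 h1, h2⟩, h1⟩
    rw [intervalIntegral.integral_of_le hx.2, e1, e2, integral_Icc_eq_integral_Ioc]
  have hR : (∫ t, (∫ x, G x t ∂μ) ∂μ) = ∫ t in (0:ℝ)..b, ∫ x in (0:ℝ)..t, H x t := by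
    rw [intervalIntegral.integral_of_le hb]
    refine setIntegral_congr_fun measurableSet_Ioc (fun t ht => ?_)
    have e1 : (∫ x, G x t ∂μ) = ∫ x in Set.Ioc 0 b ∩ Set.Iic t, H x t := by
      have e0 : (fun x => G x t) = (Set.Iic t).indicator (fun x => H x t) := by
        funext x
        simp only [hG, hS, Set.indicator_apply, Set.mem_setOf_eq, Set.mem_Iic, Function.uncurry]
      rw [hμ, e0, setIntegral_indicator measurableSet_Iic]
    have e2 : Set.Ioc 0 b ∩ Set.Iic t = Set.Ioc 0 t := by
      ext x
      simp only [Set.mem_inter_iff, Set.mem_Ioc, Set.mem_Iic]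
      constructor
      · rintro ⟨⟨h1, _⟩, h3⟩; exact ⟨h1, h3⟩
      · rintro ⟨h1, h2⟩; exact ⟨⟨h1, h2.trans ht.2⟩, h2⟩
    rw [e1, e2, intervalIntegral.integral_of_le ht.1.le]
  exact hL.trans (key.trans hR)
theorem transformed_family_complete
    (N : ℕ) (hN : 1 ≤ N)
    (P : ℝ → Matrix (Fin N) (Fin N) ℝ) (A B 𝒜 ℬ : Matrix (Fin N) (Fin N) ℝ)
    (hP : ContinuousOn P (Set.Icc 0 Real.pi))
    (hPsymm : ∀ x ∈ Set.Icc (0:ℝ) Real.pi, (P x)ᵀ = P x)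
    (hAB : B * Aᵀ = A * Bᵀ) (hAB' : ℬ * 𝒜ᵀ = 𝒜 * ℬᵀ)
    (hrkAB : (Matrix.fromCols A B).rank = N)
    (hrkAB' : (Matrix.fromCols 𝒜 ℬ).rank = N)
    -- `(φ n)` is an L²-orthogonal, complete system of eigenfunctions with eigenvalues `ev n`
    (φ : ℕ → ℝ → (Fin N → ℝ)) (ev : ℕ → ℝ) (c : ℕ → ℝ)
    (hφC : ∀ n, ContDiff ℝ 2 (φ n))
    (hφne : ∀ n, ∃ x ∈ Set.Icc (0:ℝ) Real.pi, φ n x ≠ 0)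
    (hφeq : ∀ n, ∀ x ∈ Set.Icc (0:ℝ) Real.pi,
      -(deriv (deriv (φ n)) x) + P x *ᵥ φ n x = ev n • φ n x)
    (hφbc0 : ∀ n, B *ᵥ deriv (φ n) 0 + A *ᵥ φ n 0 = 0)
    (hφbcπ : ∀ n, ℬ *ᵥ deriv (φ n) Real.pi + 𝒜 *ᵥ φ n Real.pi = 0)
    (horth : ∀ m n : ℕ, m ≠ n → ∫ x in (0:ℝ)..Real.pi, φ m x ⬝ᵥ φ n x = 0)
    (htotal : ∀ f : ℝ → Fin N → ℝ, ContinuousOn f (Set.Icc 0 Real.pi) →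
      (∀ n, ∫ x in (0:ℝ)..Real.pi, f x ⬝ᵥ φ n x = 0) →
      ∀ x ∈ Set.Icc (0:ℝ) Real.pi, f x = 0)
    (hc : ∀ n, 0 < 1 + c n * ∫ x in (0:ℝ)..Real.pi, φ n x ⬝ᵥ φ n x)
    -- `F(x,y) = ∑ n, c n • φ n x ⬝ (φ n y)ᵀ`, converging uniformly, with `F` of class C²
    (F : ℝ → ℝ → Matrix (Fin N) (Fin N) ℝ)
    (hFsum : ∀ x ∈ Set.Icc (0:ℝ) Real.pi, ∀ y ∈ Set.Icc (0:ℝ) Real.pi,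
      HasSum (fun n => c n • Matrix.vecMulVec (φ n x) (φ n y)) (F x y))
    (hFunif : TendstoUniformlyOn
      (fun (s : Finset ℕ) (p : ℝ × ℝ) => ∑ n ∈ s, c n • Matrix.vecMulVec (φ n p.1) (φ n p.2))
      (fun p => F p.1 p.2) Filter.atTop (Set.Icc 0 Real.pi ×ˢ Set.Icc 0 Real.pi))
    (hFC : ContDiff ℝ 2 (Function.uncurry F))
    -- `K` is a C² solution of the integral equation on the triangle
    (K : ℝ → ℝ → Matrix (Fin N) (Fin N) ℝ)
    (hKC : ContDiff ℝ 2 (Function.uncurry K))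
    (hKIE : ∀ x y : ℝ, 0 ≤ y → y ≤ x → x ≤ Real.pi →
      K x y + F x y + (∫ t in (0:ℝ)..x, K x t * F t y) = 0)
    (ψ : ℕ → ℝ → (Fin N → ℝ))
    (hψ : ∀ n x, ψ n x = φ n x + ∫ t in (0:ℝ)..x, K x t *ᵥ φ n t)
    (A' 𝒜' : Matrix (Fin N) (Fin N) ℝ)
    (hA' : A' = A - B * K 0 0) (h𝒜' : 𝒜' = 𝒜 - ℬ * K Real.pi Real.pi)
    (f : ℝ → Fin N → ℝ) (hfC : ContDiff ℝ 1 f)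
    (hfbc0 : B *ᵥ deriv f 0 + A' *ᵥ f 0 = 0)
    (hfbcπ : ℬ *ᵥ deriv f Real.pi + 𝒜' *ᵥ f Real.pi = 0)
    (hforth : ∀ n, ∫ x in (0:ℝ)..Real.pi, f x ⬝ᵥ ψ n x = 0) :
    ∀ x ∈ Set.Icc (0:ℝ) Real.pi, f x = 0 := by
  have hπ : (0:ℝ) ≤ Real.pi := Real.pi_pos.le
  have hfcont : Continuous f := hfC.continuous
  have hKcont : Continuous (Function.uncurry K) := hKC.continuous
  have hφcont : ∀ n, Continuous (φ n) := fun n => (hφC n).continuous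
  -- the kernel of the adjoint transform
  have hker : Continuous (Function.uncurry fun x t => (K t x)ᵀ *ᵥ f t) := by
    exact ((hKcont.comp continuous_swap).matrix_transpose).matrix_mulVec
      (hfcont.comp continuous_snd)
  have hker' : ∀ x, Continuous fun t => (K t x)ᵀ *ᵥ f t := by
    intro x
    exact ((hKcont.comp (continuous_id.prodMk continuous_const)).matrix_transpose).matrix_mulVec hfcont
  set g : ℝ → Fin N → ℝ := fun x => f x + ∫ t in x..Real.pi, (K t x)ᵀ *ᵥ f t with hg_def
  have hgcont : Continuous g := hfcont.add (cont_int_upper _ hker Real.pi)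
  -- orthogonality of g to all φ n
  have horthg : ∀ n, ∫ x in (0:ℝ)..Real.pi, g x ⬝ᵥ φ n x = 0 := by
    intro n
    have hHn : Continuous (Function.uncurry fun x t => f t ⬝ᵥ (K t x *ᵥ φ n x)) := by
      exact (hfcont.comp continuous_snd).dotProduct
        ((hKcont.comp continuous_swap).matrix_mulVec ((hφcont n).comp continuous_fst))
    have e1 : ∀ x, g x ⬝ᵥ φ n x
        = f x ⬝ᵥ φ n x + ∫ t in x..Real.pi, f t ⬝ᵥ (K t x *ᵥ φ n x) := by
      intro x
      have hi : IntervalIntegrable (fun t => (K t x)ᵀ *ᵥ f t) volume x Real.pi :=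
        (hker' x).intervalIntegrable x Real.pi
      have : g x = f x + ∫ t in x..Real.pi, (K t x)ᵀ *ᵥ f t := rfl
      rw [this, add_dotProduct, dot_integral_aux (φ n x) _ hi]
      congr 1
      refine intervalIntegral.integral_congr fun t _ => ?_
      simp [Matrix.mulVec_transpose, Matrix.dotProduct_mulVec]
    have i1 : IntervalIntegrable (fun x => f x ⬝ᵥ φ n x) volume 0 Real.pi :=
      (hfcont.dotProduct (hφcont n)).intervalIntegrable _ _
    have i2cont : Continuous fun x => ∫ t in x..Real.pi, f t ⬝ᵥ (K t x *ᵥ φ n x) :=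
      cont_int_upper _ hHn Real.pi
    have hKφcont : Continuous (Function.uncurry fun t x => K t x *ᵥ φ n x) :=
      hKcont.matrix_mulVec ((hφcont n).comp continuous_snd)
    have i3 : Continuous fun t => f t ⬝ᵥ ∫ x in (0:ℝ)..t, K t x *ᵥ φ n x := by
      refine hfcont.dotProduct ?_
      exact intervalIntegral.continuous_parametric_intervalIntegral_of_continuous
        (μ := volume) (a₀ := 0) hKφcont continuous_id
    have hswap : (∫ x in (0:ℝ)..Real.pi, ∫ t in x..Real.pi, f t ⬝ᵥ (K t x *ᵥ φ n x))
        = ∫ t in (0:ℝ)..Real.pi, ∫ x in (0:ℝ)..t, f t ⬝ᵥ (K t x *ᵥ φ n x) :=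
      triangle_swap (fun x t => f t ⬝ᵥ (K t x *ᵥ φ n x)) hHn hπ
    calc ∫ x in (0:ℝ)..Real.pi, g x ⬝ᵥ φ n x
        = ∫ x in (0:ℝ)..Real.pi,
            (f x ⬝ᵥ φ n x + ∫ t in x..Real.pi, f t ⬝ᵥ (K t x *ᵥ φ n x)) :=
          intervalIntegral.integral_congr fun x _ => e1 x
      _ = (∫ x in (0:ℝ)..Real.pi, f x ⬝ᵥ φ n x)
            + ∫ x in (0:ℝ)..Real.pi, ∫ t in x..Real.pi, f t ⬝ᵥ (K t x *ᵥ φ n x) :=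
          intervalIntegral.integral_add i1 (i2cont.intervalIntegrable _ _)
      _ = (∫ x in (0:ℝ)..Real.pi, f x ⬝ᵥ φ n x)
            + ∫ t in (0:ℝ)..Real.pi, ∫ x in (0:ℝ)..t, f t ⬝ᵥ (K t x *ᵥ φ n x) := by
          rw [hswap]
      _ = (∫ t in (0:ℝ)..Real.pi, f t ⬝ᵥ φ n t)
            + ∫ t in (0:ℝ)..Real.pi, f t ⬝ᵥ ∫ x in (0:ℝ)..t, K t x *ᵥ φ n x := by
          congr 1
          refine intervalIntegral.integral_congr fun t _ => ?_
          have hi : IntervalIntegrable (fun x => K t x *ᵥ φ n x) volume 0 t :=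
            ((hKcont.comp (Continuous.prodMk_right t)).matrix_mulVec (hφcont n)).intervalIntegrable _ _
          rw [show (∫ x in (0:ℝ)..t, f t ⬝ᵥ (K t x *ᵥ φ n x))
              = ∫ x in (0:ℝ)..t, (K t x *ᵥ φ n x) ⬝ᵥ f t from
            intervalIntegral.integral_congr fun x _ => dotProduct_comm _ _,
            ← dot_integral_aux (f t) _ hi, dotProduct_comm]
      _ = ∫ t in (0:ℝ)..Real.pi, f t ⬝ᵥ ψ n t := by
          rw [← intervalIntegral.integral_add i1 (i3.intervalIntegrable _ _)]
          refine intervalIntegral.integral_congr fun t _ => ?_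
          rw [hψ n t, dotProduct_add]
      _ = 0 := hforth n
  have hg0 : ∀ x ∈ Set.Icc (0:ℝ) Real.pi, g x = 0 := htotal g hgcont.continuousOn horthg
  -- bound for the kernel
  obtain ⟨C, hC⟩ := (isCompact_Icc.prod isCompact_Icc).exists_bound_of_continuousOn
    (s := Set.Icc (0:ℝ) Real.pi ×ˢ Set.Icc (0:ℝ) Real.pi) hKcont.continuousOn
  have hC0 : 0 ≤ C :=
    le_trans (norm_nonneg _) (hC (0, 0) ⟨⟨le_refl _, hπ⟩, ⟨le_refl _, hπ⟩⟩)
  set M : ℝ := (N : ℝ) * C with hM_def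
  have hbd : ∀ x ∈ Set.Icc (0:ℝ) Real.pi, ∀ t ∈ Set.Icc x Real.pi,
      ‖(K t x)ᵀ *ᵥ f t‖ ≤ M * ‖f t‖ := by
    intro x hx t ht
    have hmem : (t, x) ∈ Set.Icc (0:ℝ) Real.pi ×ˢ Set.Icc (0:ℝ) Real.pi :=
      ⟨⟨hx.1.trans ht.1, ht.2⟩, hx⟩
    have hKn : ∀ i j : Fin N, |K t x i j| ≤ C := fun i j =>
      (Matrix.norm_entry_le_entrywise_sup_norm (K t x)).trans (hC (t, x) hmem)
    have hMnn : 0 ≤ M * ‖f t‖ :=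
      mul_nonneg (mul_nonneg (Nat.cast_nonneg N) hC0) (norm_nonneg _)
    rw [pi_norm_le_iff_of_nonneg hMnn]
    intro i
    calc ‖((K t x)ᵀ *ᵥ f t) i‖ = |∑ j, K t x j i * f t j| := by
          simp [Matrix.mulVec, dotProduct, Matrix.transpose_apply, Real.norm_eq_abs]
      _ ≤ ∑ j, |K t x j i * f t j| := Finset.abs_sum_le_sum_abs _ _
      _ ≤ ∑ _j : Fin N, C * ‖f t‖ := by
          refine Finset.sum_le_sum fun j _ => ?_
          rw [abs_mul]
          have h1 : |f t j| ≤ ‖f t‖ := by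
            simpa [Real.norm_eq_abs] using norm_le_pi_norm (f t) j
          exact mul_le_mul (hKn j i) h1 (abs_nonneg _) hC0
      _ = M * ‖f t‖ := by
          simp [hM_def, Finset.sum_const, Finset.card_univ, nsmul_eq_mul]
          ring
  have hfeq : ∀ x ∈ Set.Icc (0:ℝ) Real.pi,
      f x = -∫ t in x..Real.pi, (K t x)ᵀ *ᵥ f t := by
    intro x hx
    have h := hg0 x hx
    have h' : f x + (∫ t in x..Real.pi, (K t x)ᵀ *ᵥ f t) = 0 := h
    exact eq_neg_of_add_eq_zero_left h'
  -- Gronwall argument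
  set u : ℝ → ℝ := fun x => ∫ t in x..Real.pi, ‖f t‖ with hu_def
  have hintf : ∀ a b : ℝ, IntervalIntegrable (fun t => ‖f t‖) volume a b :=
    fun a b => hfcont.norm.intervalIntegrable a b
  have hu_eq : ∀ x, u x = (∫ t in (0:ℝ)..Real.pi, ‖f t‖) - ∫ t in (0:ℝ)..x, ‖f t‖ := by
    intro x
    have h := intervalIntegral.integral_add_adjacent_intervals (hintf 0 x) (hintf x Real.pi)
    have : u x = ∫ t in x..Real.pi, ‖f t‖ := rfl
    rw [this]; linarith
  have hu_deriv : ∀ x, HasDerivAt u (-‖f x‖) x := by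
    intro x
    have h1 : HasDerivAt (fun y => ∫ t in (0:ℝ)..y, ‖f t‖) ‖f x‖ x :=
      intervalIntegral.integral_hasDerivAt_right (hintf 0 x)
        (hfcont.norm.stronglyMeasurableAtFilter _ _) hfcont.norm.continuousAt
    have h2 := (hasDerivAt_const x (∫ t in (0:ℝ)..Real.pi, ‖f t‖)).sub h1
    have h3 : u = fun y => (∫ t in (0:ℝ)..Real.pi, ‖f t‖) - ∫ t in (0:ℝ)..y, ‖f t‖ :=
      funext hu_eq
    rw [h3]
    rw [zero_sub] at h2; exact h2
  have hucont : Continuous u := by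
    rw [continuous_iff_continuousAt]
    exact fun x => (hu_deriv x).continuousAt
  have hkey : ∀ x ∈ Set.Icc (0:ℝ) Real.pi, ‖f x‖ ≤ M * u x := by
    intro x hx
    rw [hfeq x hx, norm_neg]
    calc ‖∫ t in x..Real.pi, (K t x)ᵀ *ᵥ f t‖
        ≤ ∫ t in x..Real.pi, ‖(K t x)ᵀ *ᵥ f t‖ :=
          intervalIntegral.norm_integral_le_integral_norm hx.2
      _ ≤ ∫ t in x..Real.pi, M * ‖f t‖ := by
          refine intervalIntegral.integral_mono_on hx.2
            ((hker' x).norm.intervalIntegrable _ _)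
            ((continuous_const.mul hfcont.norm).intervalIntegrable _ _) ?_
          exact fun t ht => hbd x hx t ht
      _ = M * u x := by rw [intervalIntegral.integral_const_mul]
  set w : ℝ → ℝ := fun x => u x * Real.exp (M * x) with hw_def
  have hw_deriv : ∀ x, HasDerivAt w ((M * u x - ‖f x‖) * Real.exp (M * x)) x := by
    intro x
    have h := (hu_deriv x).mul (((hasDerivAt_id x).const_mul M).exp)
    convert h using 1
    · rfl
    · rfl
    · rfl
    · simp only [id_eq, mul_one]
      ring
  have hwmono : MonotoneOn w (Set.Icc (0:ℝ) Real.pi) := by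
    refine monotoneOn_of_deriv_nonneg (convex_Icc 0 Real.pi)
      ((hucont.mul (Real.continuous_exp.comp (continuous_const.mul continuous_id))).continuousOn)
      (fun x _ => (hw_deriv x).differentiableAt.differentiableWithinAt) ?_
    intro x hx
    rw [(hw_deriv x).deriv]
    rw [interior_Icc] at hx
    have hx' : x ∈ Set.Icc (0:ℝ) Real.pi := Set.Ioo_subset_Icc_self hx
    have h1 := hkey x hx'
    exact mul_nonneg (by linarith) (Real.exp_pos _).le
  intro x hx
  have hux_nonneg : 0 ≤ u x :=
    intervalIntegral.integral_nonneg hx.2 fun t _ => norm_nonneg _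
  have hwx : w x ≤ w Real.pi := hwmono hx (Set.right_mem_Icc.mpr hπ) hx.2
  have hwπ : w Real.pi = 0 := by
    have : u Real.pi = 0 := intervalIntegral.integral_same
    simp [hw_def, this]
  rw [hwπ] at hwx
  have h2 : 0 ≤ u x * Real.exp (M * x) :=
    mul_nonneg hux_nonneg (Real.exp_pos _).le
  have h3 : u x * Real.exp (M * x) = 0 := le_antisymm hwx h2
  have hux0 : u x = 0 := (mul_eq_zero.mp h3).resolve_right (Real.exp_ne_zero _)
  have h4 : ‖f x‖ ≤ 0 := by
    have := hkey x hx
    rw [hux0] at this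
    simpa using this
  exact norm_le_zero_iff.mp h4
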